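/- If w̄/N > 1/μ², then G attains its maximum over [N, N + μ) at a unique point ȳ* which lies in the open interval (N, N + μ), and ȳ* satisfies the first-order condition w̄ * N/ȳ*² = (μ + ȳ* − N)/(μ + N − ȳ*)³. -/

import Mathlib

/-- If `w̄/N > 1/μ²` then `G` attains its maximum over `[N, N + μ)` at a unique
point `ȳ*`, which lies in the open interval `(N, N + μ)` and satisfies the
first-order condition `w̄N/ȳ*² = (μ + ȳ* - N)/(μ + N - ȳ*)³`. -/
theorem provider_objective_unique_interior_maximizer
    (N : ℕ) (hN : 0 < N) (μ wbar : ℝ) (hμ : 0 < μ) (hwbar : 0 < wbar)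
    (G : ℝ → ℝ)
    (hG : ∀ y, G y = (wbar / y - 1 / (μ + (N : ℝ) - y) ^ 2) * (y - (N : ℝ)))
    (hcond : 1 / μ ^ 2 < wbar / (N : ℝ)) :
    ∃ ystar ∈ Set.Ioo ((N : ℝ)) ((N : ℝ) + μ),
      (∀ y ∈ Set.Ico ((N : ℝ)) ((N : ℝ) + μ), G y ≤ G ystar) ∧
      (∀ z ∈ Set.Ico ((N : ℝ)) ((N : ℝ) + μ),
        (∀ y ∈ Set.Ico ((N : ℝ)) ((N : ℝ) + μ), G y ≤ G z) → z = ystar) ∧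
      wbar * (N : ℝ) / ystar ^ 2
        = (μ + ystar - (N : ℝ)) / (μ + (N : ℝ) - ystar) ^ 3 := by
  have hN0 : (0:ℝ) < N := by exact_mod_cast hN
  have hGfun : G = fun x => (wbar / x - 1 / (μ + (N:ℝ) - x) ^ 2) * (x - (N:ℝ)) := funext hG
  have hGN : G (N:ℝ) = 0 := by rw [hG]; ring
  -- the derivative of G
  have hderiv : ∀ y ∈ Set.Ioo ((N:ℝ)) ((N:ℝ) + μ),
      HasDerivAt G (wbar * N / y^2 - (μ + y - N)/(μ + (N:ℝ) - y)^3) y := by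
    intro y hy
    have hy0 : 0 < y := lt_trans hN0 hy.1
    have ht : 0 < μ + (N:ℝ) - y := by have := hy.2; linarith
    have hd := (((hasDerivAt_const y wbar).div (hasDerivAt_id y) hy0.ne').sub
        ((hasDerivAt_const y (1:ℝ)).div (((hasDerivAt_id y).const_sub (μ + (N:ℝ))).pow 2)
          (pow_ne_zero 2 ht.ne'))).mul ((hasDerivAt_id y).sub_const ((N:ℝ)))
    rw [hGfun]
    refine hd.congr_deriv ?_
    simp only [id, Pi.pow_apply, Pi.sub_apply, Pi.div_apply]
    field_simp
    ring
  -- strict decrease of the derivative expression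
  have hmono : ∀ y₁ ∈ Set.Ioo ((N:ℝ)) ((N:ℝ) + μ), ∀ y₂ ∈ Set.Ioo ((N:ℝ)) ((N:ℝ) + μ),
      y₁ < y₂ →
      wbar * N / y₂^2 - (μ + y₂ - N)/(μ + (N:ℝ) - y₂)^3
        < wbar * N / y₁^2 - (μ + y₁ - N)/(μ + (N:ℝ) - y₁)^3 := by
    intro y₁ hy₁ y₂ hy₂ h12
    have h10 : 0 < y₁ := lt_trans hN0 hy₁.1
    have ht1 : 0 < μ + (N:ℝ) - y₁ := by have := hy₁.2; linarith
    have ht2 : 0 < μ + (N:ℝ) - y₂ := by have := hy₂.2; linarith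
    have hnum1 : 0 < μ + y₁ - (N:ℝ) := by have := hy₁.1; linarith
    have hA : wbar * N / y₂^2 < wbar * N / y₁^2 := by
      apply div_lt_div_of_pos_left (by positivity) (by positivity)
      exact pow_lt_pow_left₀ h12 h10.le (by norm_num)
    have hB : (μ + y₁ - N)/(μ + (N:ℝ) - y₁)^3 < (μ + y₂ - N)/(μ + (N:ℝ) - y₂)^3 := by
      have s1 : (μ + y₁ - (N:ℝ))/(μ + (N:ℝ) - y₁)^3 < (μ + y₂ - N)/(μ + (N:ℝ) - y₁)^3 := by
        apply div_lt_div_of_pos_right (by linarith) (by positivity)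
      have s2 : (μ + y₂ - (N:ℝ))/(μ + (N:ℝ) - y₁)^3 ≤ (μ + y₂ - N)/(μ + (N:ℝ) - y₂)^3 := by
        apply div_le_div_of_nonneg_left (by linarith) (by positivity)
        exact pow_le_pow_left₀ ht2.le (by linarith) 3
      linarith
    linarith
  -- choose ε and b near the right endpoint where G is negative
  set s : ℝ := Real.sqrt ((N:ℝ)/wbar) with hs
  have hs0 : 0 < s := Real.sqrt_pos.mpr (by positivity)
  set ε : ℝ := min (μ/2) (s/2) with hε
  have hε0 : 0 < ε := lt_min (by linarith) (by linarith)
  have hεμ : ε ≤ μ/2 := min_le_left _ _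
  have hεs : ε < s := lt_of_le_of_lt (min_le_right _ _) (by linarith)
  have hε2 : ε^2 < (N:ℝ)/wbar := by
    have : s^2 = (N:ℝ)/wbar := Real.sq_sqrt (by positivity)
    nlinarith
  have hεw : wbar / (N:ℝ) < 1/ε^2 := by
    rw [div_lt_div_iff₀ hN0 (by positivity)]
    have h1 : ε^2 * wbar < (N:ℝ) := (lt_div_iff₀ hwbar).mp hε2
    linarith
  set b : ℝ := (N:ℝ) + μ - ε with hb
  have hNb : (N:ℝ) < b := by simp only [hb]; linarith
  have hbc : b < (N:ℝ) + μ := by simp only [hb]; linarith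
  -- G is negative on [b, N+μ)
  have hGneg : ∀ y, b ≤ y → y < (N:ℝ) + μ → G y < 0 := by
    intro y hby hyc
    have hyN : (N:ℝ) < y := lt_of_lt_of_le hNb hby
    have hy0 : 0 < y := lt_trans hN0 hyN
    have ht : 0 < μ + (N:ℝ) - y := by linarith
    have htε : μ + (N:ℝ) - y ≤ ε := by simp only [hb] at hby; linarith
    have h1 : wbar / y ≤ wbar / (N:ℝ) := div_le_div_of_nonneg_left hwbar.le hN0 hyN.le
    have h2 : 1/ε^2 ≤ 1/(μ + (N:ℝ) - y)^2 := by
      apply div_le_div_of_nonneg_left one_pos.le (by positivity)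
      exact pow_le_pow_left₀ ht.le htε 2
    rw [hG]
    apply mul_neg_of_neg_of_pos (by linarith) (by linarith)
  -- find y₀ ∈ (N, b) with G y₀ > 0
  have hF : ContinuousAt (fun y : ℝ => wbar / y - 1 / (μ + (N:ℝ) - y) ^ 2) (N:ℝ) := by
    apply ContinuousAt.sub
    · exact continuousAt_const.div continuousAt_id hN0.ne'
    · exact continuousAt_const.div (by fun_prop) (by simp; positivity)
  have hFN : 0 < wbar / (N:ℝ) - 1 / (μ + (N:ℝ) - (N:ℝ)) ^ 2 := by
    have : μ + (N:ℝ) - (N:ℝ) = μ := by ring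
    rw [this]; linarith
  have hev : ∀ᶠ y in nhdsWithin (N:ℝ) (Set.Ioi (N:ℝ)),
      0 < wbar / y - 1 / (μ + (N:ℝ) - y) ^ 2 ∧ y < b :=
    Filter.Eventually.filter_mono nhdsWithin_le_nhds
      ((hF.eventually (eventually_gt_nhds hFN)).and (eventually_lt_nhds hNb))
  obtain ⟨y₀, ⟨hy₀F, hy₀b⟩, hy₀N⟩ : ∃ y₀, (0 < wbar / y₀ - 1 / (μ + (N:ℝ) - y₀) ^ 2 ∧ y₀ < b)
      ∧ y₀ ∈ Set.Ioi (N:ℝ) := (hev.and self_mem_nhdsWithin).exists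
  have hGy₀ : 0 < G y₀ := by
    rw [hG]; exact mul_pos hy₀F (by simp only [Set.mem_Ioi] at hy₀N; linarith)
  -- G is continuous on [N, b]
  have hGcont : ContinuousOn G (Set.Icc (N:ℝ) b) := by
    rw [hGfun]
    apply ContinuousOn.mul
    · apply ContinuousOn.sub
      · exact continuousOn_const.div continuousOn_id
          (fun y hy => (lt_of_lt_of_le hN0 hy.1).ne')
      · apply continuousOn_const.div (by fun_prop)
        intro y hy
        have : 0 < μ + (N:ℝ) - y := by have := hy.2; simp only [hb] at this; linarith
        positivity
    · fun_prop
  -- maximum on [N, b]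
  obtain ⟨ystar, hyI, hymax⟩ := isCompact_Icc.exists_isMaxOn
    (Set.nonempty_Icc.mpr hNb.le) hGcont
  have hymax' : ∀ y ∈ Set.Icc (N:ℝ) b, G y ≤ G ystar := hymax
  have hy₀mem : y₀ ∈ Set.Icc (N:ℝ) b := ⟨le_of_lt hy₀N, hy₀b.le⟩
  have hGystar : 0 < G ystar := lt_of_lt_of_le hGy₀ (hymax' y₀ hy₀mem)
  -- ystar is interior
  have hyN : (N:ℝ) < ystar := by
    rcases eq_or_lt_of_le hyI.1 with h | h
    · exfalso; rw [h] at hGN; linarith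
    · exact h
  have hyb : ystar < b := by
    rcases eq_or_lt_of_le hyI.2 with h | h
    · exfalso; have := hGneg ystar (le_of_eq h.symm) (by rw [h]; exact hbc); linarith
    · exact h
  have hyIoo : ystar ∈ Set.Ioo ((N:ℝ)) ((N:ℝ) + μ) := ⟨hyN, lt_trans hyb hbc⟩
  -- max over the whole Ico
  have hmaxIco : ∀ y ∈ Set.Ico ((N:ℝ)) ((N:ℝ) + μ), G y ≤ G ystar := by
    intro y hy
    rcases le_or_gt y b with h | h
    · exact hymax' y ⟨hy.1, h⟩
    · exact le_of_lt (lt_trans (hGneg y h.le hy.2) hGystar)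
  -- local max ⇒ derivative zero at interior maximizers
  have hcrit : ∀ z ∈ Set.Ioo ((N:ℝ)) ((N:ℝ) + μ),
      (∀ y ∈ Set.Ico ((N:ℝ)) ((N:ℝ) + μ), G y ≤ G z) →
      wbar * N / z^2 - (μ + z - N)/(μ + (N:ℝ) - z)^3 = 0 := by
    intro z hz hzmax
    have hmem : Set.Ico ((N:ℝ)) ((N:ℝ) + μ) ∈ nhds z :=
      Filter.mem_of_superset (Ioo_mem_nhds hz.1 hz.2) Set.Ioo_subset_Ico_self
    have hloc : IsLocalMax G z := IsMaxOn.isLocalMax hzmax hmem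
    exact hloc.hasDerivAt_eq_zero (hderiv z hz)
  have hcrit_star := hcrit ystar hyIoo hmaxIco
  refine ⟨ystar, hyIoo, hmaxIco, ?_, by linarith [hcrit_star]⟩
  -- uniqueness
  intro z hz hzmax
  have hGz : 0 < G z := lt_of_lt_of_le hGystar (hzmax ystar (Set.Ioo_subset_Ico_self hyIoo))
  have hzN : (N:ℝ) < z := by
    rcases eq_or_lt_of_le hz.1 with h | h
    · exfalso; rw [h] at hGN; linarith
    · exact h
  have hzIoo : z ∈ Set.Ioo ((N:ℝ)) ((N:ℝ) + μ) := ⟨hzN, hz.2⟩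
  have hcrit_z := hcrit z hzIoo hzmax
  by_contra hne
  rcases lt_or_gt_of_ne hne with h | h
  · have := hmono z hzIoo ystar hyIoo h; linarith
  · have := hmono ystar hyIoo z hzIoo h; linarith
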